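/- The Gaussian f₀(x) = 2 e^{-(x₁²+x₂²)/θ} is an idempotent for the Moyal product on ℝ²: f₀ ⋆ f₀ = f₀. -/

import Mathlib

open MeasureTheory

open Complex

private lemma integral_fin2_mul (F G : ℝ → ℂ) :
    ∫ v : Fin 2 → ℝ, F (v 0) * G (v 1) = (∫ t : ℝ, F t) * ∫ t : ℝ, G t := by
  calc ∫ v : Fin 2 → ℝ, F (v 0) * G (v 1)
      = ∫ p : ℝ × ℝ, F p.1 * G p.2 := by
        rw [← (volume_preserving_finTwoArrow ℝ).integral_comp
          (MeasurableEquiv.finTwoArrow (α := ℝ)).measurableEmbedding (fun p => F p.1 * G p.2)]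
        rfl
    _ = (∫ t : ℝ, F t) * ∫ t : ℝ, G t := by
        rw [MeasureTheory.Measure.volume_eq_prod]; exact integral_prod_mul F G

private lemma gauss_one (θ : ℝ) (hθ : 0 < θ) (α β : ℂ) :
    ∫ t : ℝ, Complex.exp (-(α + t) ^ 2 / θ + β * t) =
      ((Real.pi * θ : ℝ) : ℂ) ^ (1/2 : ℂ) * Complex.exp (θ * β ^ 2 / 4 - α * β) := by
  have hθc : (θ : ℂ) ≠ 0 := Complex.ofReal_ne_zero.mpr hθ.ne'
  have hb : (-(θ:ℂ)⁻¹).re < 0 := by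
    simp only [Complex.neg_re, Complex.inv_re, Complex.ofReal_re, neg_neg]
    simp [Complex.normSq_ofReal, hθ.ne']
    positivity
  have h : ∀ t : ℝ, (-(α + (t:ℂ)) ^ 2 / θ + β * t) =
      (-(θ:ℂ)⁻¹) * (t:ℂ) ^ 2 + (β - 2*α/θ) * t + (-α^2/θ) := by
    intro t; field_simp; ring
  simp_rw [h]
  rw [integral_cexp_quadratic hb]
  congr 1
  · congr 1
    field_simp
    exact (Complex.ofReal_mul _ _).symm
  · congr 1
    field_simp
    ring

private lemma gauss_two (θ : ℝ) (hθ : 0 < θ) (α β : ℂ) :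
    ∫ t : ℝ, Complex.exp (-(α + t) ^ 2 / θ - t ^ 2 / θ + β * t) =
      ((Real.pi * θ / 2 : ℝ) : ℂ) ^ (1/2 : ℂ) *
        Complex.exp (θ * β ^ 2 / 8 - α * β / 2 - α ^ 2 / (2 * θ)) := by
  have hθc : (θ : ℂ) ≠ 0 := Complex.ofReal_ne_zero.mpr hθ.ne'
  have hb : (-(2/(θ:ℂ))).re < 0 := by
    simp only [Complex.neg_re, neg_neg]
    rw [Complex.div_re]
    simp [Complex.normSq_ofReal, hθ.ne']
    positivity
  have h : ∀ t : ℝ, (-(α + (t:ℂ)) ^ 2 / θ - (t:ℂ)^2/θ + β * t) =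
      (-(2/(θ:ℂ))) * (t:ℂ) ^ 2 + (β - 2*α/θ) * t + (-α^2/θ) := by
    intro t; field_simp; ring
  simp_rw [h]
  rw [integral_cexp_quadratic hb]
  congr 1
  · congr 1
    field_simp
    simp only [Complex.ofReal_mul, Complex.ofReal_div, Complex.ofReal_one, Complex.ofReal_ofNat]
    try ring
  · congr 1
    field_simp
    try ring

private lemma ofReal_two_exp (u : ℝ) : ((2 * Real.exp u : ℝ) : ℂ) = 2 * Complex.exp (u : ℂ) := by
  push_cast
  rfl

/-- The Moyal star product on `ℝ²` with deformation parameter `θ`: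
`(f ⋆ g)(x) = (πθ)⁻² ∫∫ f(x+v) g(x+w) e^{(2i/θ)(v₁w₂ − v₂w₁)} dv dw`. -/
noncomputable def moyalTheta (θ : ℝ) (f g : (Fin 2 → ℝ) → ℂ) : (Fin 2 → ℝ) → ℂ := fun x =>
  (((Real.pi * θ) ^ 2 : ℝ) : ℂ)⁻¹ *
    ∫ v : Fin 2 → ℝ, ∫ w : Fin 2 → ℝ,
      f (x + v) * g (x + w) *
        Complex.exp ((2 * Complex.I / (θ : ℂ)) * ((v 0 * w 1 - v 1 * w 0 : ℝ) : ℂ))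

set_option maxHeartbeats 1000000 in
/-- The Gaussian `f₀(x) = 2 e^{-(x₁²+x₂²)/θ}` is an idempotent for the Moyal product:
`f₀ ⋆ f₀ = f₀`. -/
theorem gaussian_idempotent (θ : ℝ) (hθ : 0 < θ) :
    moyalTheta θ (fun x => (2 * Real.exp (-(x 0 ^ 2 + x 1 ^ 2) / θ) : ℝ))
        (fun x => (2 * Real.exp (-(x 0 ^ 2 + x 1 ^ 2) / θ) : ℝ)) =
      fun x => ((2 * Real.exp (-(x 0 ^ 2 + x 1 ^ 2) / θ) : ℝ) : ℂ) := by
  have hπθ : (0:ℝ) < Real.pi * θ := by positivity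
  have hθc : (θ : ℂ) ≠ 0 := Complex.ofReal_ne_zero.mpr hθ.ne'
  have hπc : (Real.pi : ℂ) ≠ 0 := Complex.ofReal_ne_zero.mpr Real.pi_ne_zero
  funext x
  unfold moyalTheta
  simp only []
  have hinner : ∀ v : Fin 2 → ℝ,
      (∫ w : Fin 2 → ℝ,
        ((2 * Real.exp (-((x + v) 0 ^ 2 + (x + v) 1 ^ 2) / θ) : ℝ) : ℂ) *
          ((2 * Real.exp (-((x + w) 0 ^ 2 + (x + w) 1 ^ 2) / θ) : ℝ) : ℂ) *
          Complex.exp (2 * Complex.I / (θ:ℂ) * ((v 0 * w 1 - v 1 * w 0 : ℝ) : ℂ))) =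
      ((2 * Real.exp (-((x + v) 0 ^ 2 + (x + v) 1 ^ 2) / θ) : ℝ) : ℂ) *
        (2 * (((Real.pi * θ : ℝ):ℂ) ^ (1/2:ℂ) * ((Real.pi * θ : ℝ):ℂ) ^ (1/2:ℂ)) *
          Complex.exp (-(v 0:ℂ)^2/θ - (v 1:ℂ)^2/θ
            + 2*Complex.I/θ * ((x 0:ℂ) * (v 1:ℂ) - (x 1:ℂ) * (v 0:ℂ)))) := by
    intro v
    have hpt : ∀ w : Fin 2 → ℝ,
        ((2 * Real.exp (-((x + v) 0 ^ 2 + (x + v) 1 ^ 2) / θ) : ℝ) : ℂ) *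
          ((2 * Real.exp (-((x + w) 0 ^ 2 + (x + w) 1 ^ 2) / θ) : ℝ) : ℂ) *
          Complex.exp (2 * Complex.I / (θ:ℂ) * ((v 0 * w 1 - v 1 * w 0 : ℝ) : ℂ)) =
        ((2 * Real.exp (-((x + v) 0 ^ 2 + (x + v) 1 ^ 2) / θ) : ℝ) : ℂ) *
          ((2 * Complex.exp (-((x 0:ℂ) + ((w 0 : ℝ):ℂ))^2/θ
              + (-(2*Complex.I*((v 1 : ℝ):ℂ))/θ) * ((w 0 : ℝ):ℂ))) *
            Complex.exp (-((x 1:ℂ) + ((w 1 : ℝ):ℂ))^2/θ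
              + (2*Complex.I*((v 0 : ℝ):ℂ)/θ) * ((w 1 : ℝ):ℂ))) := by
      intro w
      rw [mul_assoc]
      congr 1
      rw [ofReal_two_exp]
      have harg : ((-((x + w) 0 ^ 2 + (x + w) 1 ^ 2) / θ : ℝ):ℂ)
          + 2 * Complex.I / (θ:ℂ) * ((v 0 * w 1 - v 1 * w 0 : ℝ) : ℂ)
        = (-((x 0:ℂ) + ((w 0 : ℝ):ℂ))^2/θ + (-(2*Complex.I*((v 1 : ℝ):ℂ))/θ) * ((w 0 : ℝ):ℂ))
          + (-((x 1:ℂ) + ((w 1 : ℝ):ℂ))^2/θ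
            + (2*Complex.I*((v 0 : ℝ):ℂ)/θ) * ((w 1 : ℝ):ℂ)) := by
        push_cast [Pi.add_apply]
        field_simp
        ring
      calc 2 * Complex.exp (((-((x + w) 0 ^ 2 + (x + w) 1 ^ 2) / θ : ℝ):ℂ)) *
            Complex.exp (2 * Complex.I / (θ:ℂ) * ((v 0 * w 1 - v 1 * w 0 : ℝ) : ℂ))
          = 2 * Complex.exp (((-((x + w) 0 ^ 2 + (x + w) 1 ^ 2) / θ : ℝ):ℂ)
              + 2 * Complex.I / (θ:ℂ) * ((v 0 * w 1 - v 1 * w 0 : ℝ) : ℂ)) := by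
            rw [Complex.exp_add]; ring
        _ = _ := by rw [harg, Complex.exp_add]; ring
    simp_rw [hpt]
    rw [MeasureTheory.integral_const_mul]
    congr 1
    have hsplit := integral_fin2_mul
      (fun t : ℝ => 2 * Complex.exp (-((x 0:ℂ) + (t:ℂ))^2/θ
        + (-(2*Complex.I*((v 1 : ℝ):ℂ))/θ) * (t:ℂ)))
      (fun t : ℝ => Complex.exp (-((x 1:ℂ) + (t:ℂ))^2/θ
        + (2*Complex.I*((v 0 : ℝ):ℂ)/θ) * (t:ℂ)))
    beta_reduce at hsplit
    rw [hsplit, MeasureTheory.integral_const_mul,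
      gauss_one θ hθ (x 0 : ℂ) (-(2*Complex.I*((v 1 : ℝ):ℂ))/θ),
      gauss_one θ hθ (x 1 : ℂ) (2*Complex.I*((v 0 : ℝ):ℂ)/θ)]
    have hT : (-(v 0:ℂ)^2/θ - (v 1:ℂ)^2/θ
          + 2*Complex.I/θ * ((x 0:ℂ) * (v 1:ℂ) - (x 1:ℂ) * (v 0:ℂ)))
        = ((θ:ℂ) * (-(2*Complex.I*((v 1 : ℝ):ℂ))/θ)^2/4
              - (x 0:ℂ) * (-(2*Complex.I*((v 1 : ℝ):ℂ))/θ))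
          + ((θ:ℂ) * (2*Complex.I*((v 0 : ℝ):ℂ)/θ)^2/4
              - (x 1:ℂ) * (2*Complex.I*((v 0 : ℝ):ℂ)/θ)) := by
      field_simp
      ring_nf
      simp only [Complex.I_sq]
      ring
    rw [hT, Complex.exp_add]
    ring
  simp_rw [hinner]
  have hpt2 : ∀ v : Fin 2 → ℝ,
      ((2 * Real.exp (-((x + v) 0 ^ 2 + (x + v) 1 ^ 2) / θ) : ℝ) : ℂ) *
        (2 * (((Real.pi * θ : ℝ):ℂ) ^ (1/2:ℂ) * ((Real.pi * θ : ℝ):ℂ) ^ (1/2:ℂ)) *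
          Complex.exp (-(v 0:ℂ)^2/θ - (v 1:ℂ)^2/θ
            + 2*Complex.I/θ * ((x 0:ℂ) * (v 1:ℂ) - (x 1:ℂ) * (v 0:ℂ)))) =
      (2 * (((Real.pi * θ : ℝ):ℂ) ^ (1/2:ℂ) * ((Real.pi * θ : ℝ):ℂ) ^ (1/2:ℂ))) *
        ((2 * Complex.exp (-((x 0:ℂ) + ((v 0 : ℝ):ℂ))^2/θ - ((v 0 : ℝ):ℂ)^2/θ
            + (-(2*Complex.I*(x 1:ℂ))/θ) * ((v 0 : ℝ):ℂ))) *
          Complex.exp (-((x 1:ℂ) + ((v 1 : ℝ):ℂ))^2/θ - ((v 1 : ℝ):ℂ)^2/θ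
            + (2*Complex.I*(x 0:ℂ)/θ) * ((v 1 : ℝ):ℂ))) := by
    intro v
    rw [ofReal_two_exp]
    have harg2 : ((-((x + v) 0 ^ 2 + (x + v) 1 ^ 2) / θ : ℝ):ℂ)
        + (-(v 0:ℂ)^2/θ - (v 1:ℂ)^2/θ
          + 2*Complex.I/θ * ((x 0:ℂ) * (v 1:ℂ) - (x 1:ℂ) * (v 0:ℂ)))
      = (-((x 0:ℂ) + ((v 0 : ℝ):ℂ))^2/θ - ((v 0 : ℝ):ℂ)^2/θ
          + (-(2*Complex.I*(x 1:ℂ))/θ) * ((v 0 : ℝ):ℂ))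
        + (-((x 1:ℂ) + ((v 1 : ℝ):ℂ))^2/θ - ((v 1 : ℝ):ℂ)^2/θ
          + (2*Complex.I*(x 0:ℂ)/θ) * ((v 1 : ℝ):ℂ)) := by
      push_cast [Pi.add_apply]
      field_simp
      ring
    calc 2 * Complex.exp (((-((x + v) 0 ^ 2 + (x + v) 1 ^ 2) / θ : ℝ):ℂ)) *
          (2 * (((Real.pi * θ : ℝ):ℂ) ^ (1/2:ℂ) * ((Real.pi * θ : ℝ):ℂ) ^ (1/2:ℂ)) *
            Complex.exp (-(v 0:ℂ)^2/θ - (v 1:ℂ)^2/θ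
              + 2*Complex.I/θ * ((x 0:ℂ) * (v 1:ℂ) - (x 1:ℂ) * (v 0:ℂ))))
        = (2 * (((Real.pi * θ : ℝ):ℂ) ^ (1/2:ℂ) * ((Real.pi * θ : ℝ):ℂ) ^ (1/2:ℂ))) *
            (2 * Complex.exp (((-((x + v) 0 ^ 2 + (x + v) 1 ^ 2) / θ : ℝ):ℂ)
              + (-(v 0:ℂ)^2/θ - (v 1:ℂ)^2/θ
                + 2*Complex.I/θ * ((x 0:ℂ) * (v 1:ℂ) - (x 1:ℂ) * (v 0:ℂ))))) := by
          rw [Complex.exp_add (((-((x + v) 0 ^ 2 + (x + v) 1 ^ 2) / θ : ℝ):ℂ))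
            (-(v 0:ℂ)^2/θ - (v 1:ℂ)^2/θ
              + 2*Complex.I/θ * ((x 0:ℂ) * (v 1:ℂ) - (x 1:ℂ) * (v 0:ℂ)))]
          ring
      _ = _ := by rw [harg2, Complex.exp_add]; ring
  simp_rw [hpt2]
  rw [MeasureTheory.integral_const_mul]
  have hsplit2 := integral_fin2_mul
    (fun t : ℝ => 2 * Complex.exp (-((x 0:ℂ) + (t:ℂ))^2/θ - (t:ℂ)^2/θ
      + (-(2*Complex.I*(x 1:ℂ))/θ) * (t:ℂ)))
    (fun t : ℝ => Complex.exp (-((x 1:ℂ) + (t:ℂ))^2/θ - (t:ℂ)^2/θ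
      + (2*Complex.I*(x 0:ℂ)/θ) * (t:ℂ)))
  beta_reduce at hsplit2
  rw [hsplit2, MeasureTheory.integral_const_mul,
    gauss_two θ hθ (x 0 : ℂ) (-(2*Complex.I*(x 1:ℂ))/θ),
    gauss_two θ hθ (x 1 : ℂ) (2*Complex.I*(x 0:ℂ)/θ)]
  have hS : ((Real.pi*θ:ℝ):ℂ)^(1/2:ℂ) * ((Real.pi*θ:ℝ):ℂ)^(1/2:ℂ) = ((Real.pi*θ:ℝ):ℂ) := by
    rw [← Complex.cpow_add _ _ (Complex.ofReal_ne_zero.mpr hπθ.ne')]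
    norm_num
  have hS2 : ((Real.pi*θ/2:ℝ):ℂ)^(1/2:ℂ) * ((Real.pi*θ/2:ℝ):ℂ)^(1/2:ℂ)
      = ((Real.pi*θ/2:ℝ):ℂ) := by
    rw [← Complex.cpow_add _ _
      (Complex.ofReal_ne_zero.mpr (by positivity : (0:ℝ) < Real.pi*θ/2).ne')]
    norm_num
  have hexp : Complex.exp ((θ:ℂ) * (-(2*Complex.I*(x 1:ℂ))/θ)^2/8
        - (x 0:ℂ) * (-(2*Complex.I*(x 1:ℂ))/θ)/2 - (x 0:ℂ)^2/(2*θ)) *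
      Complex.exp ((θ:ℂ) * (2*Complex.I*(x 0:ℂ)/θ)^2/8
        - (x 1:ℂ) * (2*Complex.I*(x 0:ℂ)/θ)/2 - (x 1:ℂ)^2/(2*θ))
      = Complex.exp (-((x 0:ℂ)^2 + (x 1:ℂ)^2)/θ) := by
    rw [← Complex.exp_add]
    congr 1
    have e1 : (-(2*Complex.I*(x 1:ℂ))/(θ:ℂ))^2 = -(4*(x 1:ℂ)^2/(θ:ℂ)^2) := by
      rw [div_pow, neg_pow, mul_pow, mul_pow, Complex.I_sq]
      ring
    have e2 : (2*Complex.I*(x 0:ℂ)/(θ:ℂ))^2 = -(4*(x 0:ℂ)^2/(θ:ℂ)^2) := by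
      rw [div_pow, mul_pow, mul_pow, Complex.I_sq]
      ring
    rw [e1, e2]
    linear_combination (-((x 0:ℂ)^2+(x 1:ℂ)^2)/(2*(θ:ℂ))) * (mul_inv_cancel₀ hθc)
  rw [show ((2 * Real.exp (-(x 0 ^ 2 + x 1 ^ 2) / θ) : ℝ) : ℂ)
      = 2 * Complex.exp (-((x 0:ℂ)^2 + (x 1:ℂ)^2)/θ) by
    rw [ofReal_two_exp]; congr 1; push_cast; ring]
  rw [← hexp]
  calc (((Real.pi * θ) ^ 2 : ℝ) : ℂ)⁻¹ *
      ((2 * (((Real.pi*θ:ℝ):ℂ)^(1/2:ℂ) * ((Real.pi*θ:ℝ):ℂ)^(1/2:ℂ))) *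
        ((2 * (((Real.pi*θ/2:ℝ):ℂ)^(1/2:ℂ) *
            Complex.exp ((θ:ℂ) * (-(2*Complex.I*(x 1:ℂ))/θ)^2/8
              - (x 0:ℂ) * (-(2*Complex.I*(x 1:ℂ))/θ)/2 - (x 0:ℂ)^2/(2*θ)))) *
          (((Real.pi*θ/2:ℝ):ℂ)^(1/2:ℂ) *
            Complex.exp ((θ:ℂ) * (2*Complex.I*(x 0:ℂ)/θ)^2/8
              - (x 1:ℂ) * (2*Complex.I*(x 0:ℂ)/θ)/2 - (x 1:ℂ)^2/(2*θ)))))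
      = ((((Real.pi * θ) ^ 2 : ℝ) : ℂ)⁻¹ *
          (2 * (((Real.pi*θ:ℝ):ℂ)^(1/2:ℂ) * ((Real.pi*θ:ℝ):ℂ)^(1/2:ℂ))) *
          (2 * (((Real.pi*θ/2:ℝ):ℂ)^(1/2:ℂ) * ((Real.pi*θ/2:ℝ):ℂ)^(1/2:ℂ)))) *
        (Complex.exp ((θ:ℂ) * (-(2*Complex.I*(x 1:ℂ))/θ)^2/8
            - (x 0:ℂ) * (-(2*Complex.I*(x 1:ℂ))/θ)/2 - (x 0:ℂ)^2/(2*θ)) *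
          Complex.exp ((θ:ℂ) * (2*Complex.I*(x 0:ℂ)/θ)^2/8
            - (x 1:ℂ) * (2*Complex.I*(x 0:ℂ)/θ)/2 - (x 1:ℂ)^2/(2*θ))) := by ring
    _ = _ := by
        rw [hS, hS2]
        congr 1
        push_cast
        field_simp
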